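/- For every natural number x and every natural number n ≥ 1, [x]_f [x−1]_f ⋯ [x−n+1]_f = Σ_{j=0}^{n} s_f(n,j) · [x]_f^j, where [m]_f = ε_m = (1 − (−1)^m)/2. -/

import Mathlib

open Finset

/-- `ε_n = (1 - (-1)^n)/2`, so `ε_n = 0` for even `n` and `ε_n = 1` for odd `n`. -/
def eps (n : ℕ) : ℤ := (1 - (-1 : ℤ) ^ n) / 2

/-- The fermionic Stirling numbers of the first kind, defined by the recurrence
`s_f(n+1,k) = (-1)^n s_f(n,k-1) + (-1)^{n+1} ε_n s_f(n,k)`, with `s_f(0,0) = 1`,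
`s_f(n,0) = 0` for `n ≥ 1`, and `s_f(n,k) = 0` for `k > n`. -/
def sf : ℕ → ℕ → ℤ
  | 0, 0 => 1
  | 0, _ + 1 => 0
  | _ + 1, 0 => 0
  | n + 1, k + 1 => (-1 : ℤ) ^ n * sf n k + (-1 : ℤ) ^ (n + 1) * eps n * sf n (k + 1)

/-- `ε_m = (1 - (-1)^m)/2` for an integer `m` (valued in `ℚ`): the fermionic basic
number `[m]_f`. -/
noncomputable def epsZ (m : ℤ) : ℚ := (1 - (-1 : ℚ) ^ m) / 2

lemma epsZ_even {m : ℤ} (h : Even m) : epsZ m = 0 := by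
  simp [epsZ, h.neg_one_zpow]

lemma epsZ_odd {m : ℤ} (h : Odd m) : epsZ m = 1 := by
  rw [epsZ, h.neg_one_zpow]
  norm_num

lemma sf_eq_zero : ∀ n k, n < k → sf n k = 0 := by
  intro n
  induction n with
  | zero => intro k hk; match k, hk with | k + 1, _ => rfl
  | succ n ih =>
    intro k hk
    match k, hk with
    | k + 1, hk =>
      have h1 : sf n k = 0 := ih k (by omega)
      have h2 : sf n (k + 1) = 0 := ih (k + 1) (by omega)
      simp [sf, h1, h2]

/-- Row sums of the fermionic Stirling numbers. -/
def S (n : ℕ) : ℤ := ∑ j ∈ Finset.range (n + 1), sf n j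

lemma S_succ (m : ℕ) :
    S (m + 2) = (-1 : ℤ) ^ (m + 1) * (1 - eps (m + 1)) * S (m + 1) := by
  have hshift : ∑ i ∈ Finset.range (m + 2), sf (m + 1) (i + 1) = S (m + 1) := by
    have h := Finset.sum_range_succ' (sf (m + 1)) (m + 2)
    rw [Finset.sum_range_succ, sf_eq_zero (m + 1) (m + 2) (by omega)] at h
    have h0 : sf (m + 1) 0 = 0 := rfl
    rw [h0, add_zero, add_zero] at h
    exact h.symm
  have hS : S (m + 2) = ∑ i ∈ Finset.range (m + 2), sf (m + 2) (i + 1) := by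
    have h2 := Finset.sum_range_succ' (sf (m + 2)) (m + 2)
    have h0 : sf (m + 2) 0 = 0 := rfl
    rw [h0, add_zero] at h2
    exact h2
  rw [hS]
  have hterm : ∀ i ∈ Finset.range (m + 2), sf (m + 2) (i + 1)
      = (-1 : ℤ) ^ (m + 1) * sf (m + 1) i
        + (-1 : ℤ) ^ (m + 2) * eps (m + 1) * sf (m + 1) (i + 1) := fun i _ => rfl
  rw [Finset.sum_congr rfl hterm, Finset.sum_add_distrib, ← Finset.mul_sum]
  have hms : ∑ i ∈ Finset.range (m + 2), (-1 : ℤ) ^ (m + 2) * eps (m + 1) * sf (m + 1) (i + 1)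
      = (-1 : ℤ) ^ (m + 2) * eps (m + 1) * S (m + 1) := by
    rw [← Finset.mul_sum, hshift]
  rw [hms]
  have hSdef : ∑ i ∈ Finset.range (m + 2), sf (m + 1) i = S (m + 1) := rfl
  rw [hSdef, pow_succ (-1 : ℤ) (m + 1)]
  ring

lemma S_two_add (k : ℕ) : S (k + 2) = 0 := by
  induction k with
  | zero =>
    show (∑ j ∈ Finset.range 3, sf 2 j) = 0
    rw [Finset.sum_range_succ, Finset.sum_range_succ, Finset.sum_range_one]
    norm_num [sf, eps]
  | succ k ih =>
    rw [show k + 1 + 2 = k + 1 + 2 from rfl, S_succ (k + 1), ih, mul_zero]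

theorem fermionicFallingFactorial_eq_sum_sf_pow (x n : ℕ) (hn : 1 ≤ n) :
    (∏ i ∈ Finset.range n, epsZ ((x : ℤ) - i)) =
      ∑ j ∈ Finset.range (n + 1), (sf n j : ℚ) * epsZ (x : ℤ) ^ j := by
  have hε : epsZ (x : ℤ) = 0 ∨ epsZ (x : ℤ) = 1 := by
    rcases Int.even_or_odd (x : ℤ) with h | h
    · exact Or.inl (epsZ_even h)
    · exact Or.inr (epsZ_odd h)
  obtain _ | _ | m := n
  · omega
  · norm_num [Finset.prod_range_one, Finset.sum_range_succ, sf, eps]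
  · have hL : (∏ i ∈ Finset.range (m + 2), epsZ ((x : ℤ) - i)) = 0 := by
      rcases Int.even_or_odd (x : ℤ) with h | h
      · refine Finset.prod_eq_zero (Finset.mem_range.2 (by omega : 0 < m + 2)) ?_
        have : Even ((x : ℤ) - (0 : ℕ)) := by simpa using h
        exact epsZ_even this
      · refine Finset.prod_eq_zero (Finset.mem_range.2 (by omega : 1 < m + 2)) ?_
        have : Even ((x : ℤ) - (1 : ℕ)) := by
          rcases h with ⟨k, hk⟩; exact ⟨k, by push_cast; omega⟩
        exact epsZ_even this
    rw [hL]
    have hterm : ∀ j ∈ Finset.range (m + 2 + 1),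
        (sf (m + 2) j : ℚ) * epsZ (x : ℤ) ^ j = (sf (m + 2) j : ℚ) * epsZ (x : ℤ) := by
      intro j _
      cases j with
      | zero => norm_num [show sf (m + 2) 0 = 0 from rfl]
      | succ j => rcases hε with h | h <;> simp [h]
    rw [Finset.sum_congr rfl hterm, ← Finset.sum_mul]
    have hcast : (∑ j ∈ Finset.range (m + 2 + 1), (sf (m + 2) j : ℚ))
        = ((S (m + 2) : ℤ) : ℚ) := by
      rw [S]; push_cast; ring
    rw [hcast, S_two_add, Int.cast_zero, zero_mul]
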